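/- (Corollary 2, UL–DL MMSE duality) Let Ĝ be a nonzero M×K complex matrix, let R̃ be an M×M complex Hermitian positive semidefinite matrix, and let ρ > 0; set D = R̃ + (1/ρ)·I_M, C = Ĝ·Ĝᴴ + D, and γ = √(trace(Ĝᴴ·C⁻²·Ĝ)/K). Then the optimal uplink receiver W_opt = (C⁻¹·Ĝ)* and the optimal downlink precoder B_opt = (1/γ)·(C⁻¹·Ĝ)* satisfy B_opt = W_opt/γ, and the minimum uplink MSE-SD min_W Re trace(Wᵀ·C·W* + I_K − Wᵀ·Ĝ − Ĝᴴ·W*) equals the minimum downlink MSE-SD min_{(B,α): trace(BBᴴ)≤K, α∈ℝ} [Re trace(α²·Bᴴ·(Ĝ*·Ĝᵀ + R̃*)·B − α·Ĝᵀ·B − α·Bᴴ·Ĝ*) + (α²/ρ + 1)·K], both being equal to trace((I_K + Ĝᴴ·D⁻¹·Ĝ)⁻¹). -/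

import Mathlib

open scoped ComplexOrder
open Matrix

/-- Entrywise complex conjugate of a matrix. -/
def mconj {m n : Type*} (A : Matrix m n ℂ) : Matrix m n ℂ := A.map (starRingEnd ℂ)

lemma mconj_eq {m n : Type*} (A : Matrix m n ℂ) : mconj A = Aᵀᴴ := rfl

lemma mconj_mconj {m n : Type*} (A : Matrix m n ℂ) : mconj (mconj A) = A := by
  ext i j; simp [mconj]

lemma mconj_mul {m n p : Type*} [Fintype n] (A : Matrix m n ℂ) (B : Matrix n p ℂ) :
    mconj (A * B) = mconj A * mconj B := by
  simp [mconj_eq, transpose_mul, conjTranspose_mul]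

lemma mconj_add {m n : Type*} (A B : Matrix m n ℂ) : mconj (A + B) = mconj A + mconj B := by
  simp [mconj_eq]

lemma mconj_smul_real {m n : Type*} (r : ℝ) (A : Matrix m n ℂ) :
    mconj (r • A) = r • mconj A := by
  ext i j; simp [mconj, Complex.real_smul]

lemma mconj_smul_ofReal {m n : Type*} (r : ℝ) (A : Matrix m n ℂ) :
    mconj ((r : ℂ) • A) = (r : ℂ) • mconj A := by
  ext i j; simp [mconj]

lemma mconj_one {n : Type*} [DecidableEq n] : mconj (1 : Matrix n n ℂ) = 1 := by
  simp [mconj_eq]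

lemma conjTranspose_mconj {m n : Type*} (A : Matrix m n ℂ) : (mconj A)ᴴ = Aᵀ := by
  simp [mconj_eq]

lemma transpose_mconj {m n : Type*} (A : Matrix m n ℂ) : (mconj A)ᵀ = Aᴴ := by
  ext i j; simp [mconj, Matrix.conjTranspose_apply]

lemma mconj_conjTranspose {m n : Type*} (A : Matrix m n ℂ) : mconj (Aᴴ) = Aᵀ := by
  ext i j; simp [mconj, Matrix.conjTranspose_apply]

lemma mconj_transpose {m n : Type*} (A : Matrix m n ℂ) : mconj (Aᵀ) = Aᴴ := by
  simp [mconj_eq]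

lemma trace_mconj {n : Type*} [Fintype n] (A : Matrix n n ℂ) :
    (mconj A).trace = (starRingEnd ℂ) A.trace := by
  simp [Matrix.trace, mconj, Matrix.diag, map_sum]

lemma re_trace_mconj {n : Type*} [Fintype n] (A : Matrix n n ℂ) :
    ((mconj A).trace).re = (A.trace).re := by
  rw [trace_mconj]; exact Complex.conj_re _

lemma trace_mul_conjTranspose_self {m n : Type*} [Fintype m] [Fintype n]
    (B : Matrix m n ℂ) :
    (B * Bᴴ).trace = ((∑ i, ∑ j, Complex.normSq (B i j) : ℝ) : ℂ) := by
  simp only [Matrix.trace, Matrix.diag, Matrix.mul_apply, Matrix.conjTranspose_apply]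
  push_cast
  congr 1; ext i; congr 1; ext j
  exact Complex.mul_conj _

lemma psd_trace_re_nonneg {n : Type*} [Fintype n] [DecidableEq n] {P : Matrix n n ℂ}
    (hP : P.PosSemidef) : 0 ≤ (P.trace).re := by
  have h : (0 : ℂ) ≤ P.trace := by
    rw [Matrix.trace]
    apply Finset.sum_nonneg
    intro i _
    exact hP.diag_nonneg
  exact (Complex.le_def.mp h).1

/-- **Corollary 2 (UL–DL MMSE duality).** With `D = R̃ + (1/ρ) I`, `C = Ghat Ghatᴴ + D` and
`γ = √(trace (Ghatᴴ C⁻² Ghat)/K)`, the optimal uplink receiver `Wopt = (C⁻¹ Ghat)*` and the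
optimal downlink precoder `Bopt = (1/γ)(C⁻¹ Ghat)*` satisfy `Bopt = Wopt / γ`, and the minimum
uplink MSE-SD equals the minimum downlink MSE-SD, both being `trace ((I + Ghatᴴ D⁻¹ Ghat)⁻¹)`. -/
theorem ul_dl_mmse_duality
    {M K : ℕ} (hK : 1 ≤ K)
    (Ghat : Matrix (Fin M) (Fin K) ℂ) (hGhat : Ghat ≠ 0)
    (Rt : Matrix (Fin M) (Fin M) ℂ) (hRt : Rt.PosSemidef)
    (ρ : ℝ) (hρ : 0 < ρ)
    (D : Matrix (Fin M) (Fin M) ℂ) (hD : D = Rt + ((1 / ρ : ℝ) : ℂ) • 1)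
    (C : Matrix (Fin M) (Fin M) ℂ) (hC : C = Ghat * Ghatᴴ + D)
    (γ : ℝ) (hγ : γ = Real.sqrt (((Ghatᴴ * C⁻¹ * C⁻¹ * Ghat).trace).re / K))
    (Wopt : Matrix (Fin M) (Fin K) ℂ) (hWopt : Wopt = mconj (C⁻¹ * Ghat))
    (Bopt : Matrix (Fin M) (Fin K) ℂ) (hBopt : Bopt = γ⁻¹ • mconj (C⁻¹ * Ghat))
    (εu : Matrix (Fin M) (Fin K) ℂ → ℝ)
    (hεu : ∀ W, εu W =
      ((Wᵀ * C * mconj W + 1 - Wᵀ * Ghat - Ghatᴴ * mconj W).trace).re)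
    (εd : Matrix (Fin M) (Fin K) ℂ → ℝ → ℝ)
    (hεd : ∀ B α, εd B α =
      (((α ^ 2 : ℝ) • (Bᴴ * (mconj Ghat * Ghatᵀ + mconj Rt) * B)
        - α • (Ghatᵀ * B) - α • (Bᴴ * mconj Ghat)).trace).re + (α ^ 2 / ρ + 1) * K) :
    Bopt = γ⁻¹ • Wopt ∧
    IsLeast {x : ℝ | ∃ W : Matrix (Fin M) (Fin K) ℂ, x = εu W}
      (((1 + Ghatᴴ * D⁻¹ * Ghat)⁻¹).trace).re ∧
    IsLeast {x : ℝ | ∃ (B : Matrix (Fin M) (Fin K) ℂ) (α : ℝ),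
        (B * Bᴴ).trace ≤ (K : ℂ) ∧ x = εd B α}
      (((1 + Ghatᴴ * D⁻¹ * Ghat)⁻¹).trace).re := by
  have hKpos : (0:ℝ) < K := by exact_mod_cast hK
  have hρ' : (0:ℝ) < 1/ρ := by positivity
  -- positive definiteness
  have hIpd : ((((1/ρ : ℝ) : ℂ)) • (1 : Matrix (Fin M) (Fin M) ℂ)).PosDef := by
    rw [Matrix.smul_one_eq_diagonal]
    exact Matrix.PosDef.diagonal fun i => by
      simpa using (Complex.zero_lt_real.mpr hρ')
  have hDpd : D.PosDef := by rw [hD]; exact Matrix.PosDef.posSemidef_add hRt hIpd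
  have hCpd : C.PosDef := by
    rw [hC]; exact Matrix.PosDef.posSemidef_add (Matrix.posSemidef_self_mul_conjTranspose Ghat) hDpd
  have hCdet : IsUnit C.det := (Matrix.isUnit_iff_isUnit_det _).mp hCpd.isUnit
  have hDdet : IsUnit D.det := (Matrix.isUnit_iff_isUnit_det _).mp hDpd.isUnit
  have hCCi : C * C⁻¹ = 1 := Matrix.mul_nonsing_inv _ hCdet
  have hCiC : C⁻¹ * C = 1 := Matrix.nonsing_inv_mul _ hCdet
  have hDiD : D⁻¹ * D = 1 := Matrix.nonsing_inv_mul _ hDdet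
  have hCih : (C⁻¹)ᴴ = C⁻¹ := hCpd.isHermitian.inv
  -- the Woodbury-type identity
  have hGG : Ghat * Ghatᴴ = C - D := by rw [hC]; exact (add_sub_cancel_right _ _).symm
  have hAB : (Ghatᴴ * D⁻¹ * Ghat) * (Ghatᴴ * C⁻¹ * Ghat)
      = Ghatᴴ * D⁻¹ * Ghat - Ghatᴴ * C⁻¹ * Ghat := by
    calc (Ghatᴴ * D⁻¹ * Ghat) * (Ghatᴴ * C⁻¹ * Ghat)
        = Ghatᴴ * D⁻¹ * (Ghat * Ghatᴴ) * (C⁻¹ * Ghat) := by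
          simp only [Matrix.mul_assoc]
      _ = Ghatᴴ * D⁻¹ * (C - D) * (C⁻¹ * Ghat) := by rw [hGG]
      _ = Ghatᴴ * (D⁻¹ * (C * (C⁻¹ * Ghat))) - Ghatᴴ * ((D⁻¹ * D) * (C⁻¹ * Ghat)) := by
          rw [Matrix.mul_sub, Matrix.sub_mul]; simp only [Matrix.mul_assoc]
      _ = Ghatᴴ * D⁻¹ * Ghat - Ghatᴴ * C⁻¹ * Ghat := by
          rw [← Matrix.mul_assoc C, hCCi, Matrix.one_mul, hDiD, Matrix.one_mul]
          simp only [Matrix.mul_assoc]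
  have hkey : (1 + Ghatᴴ * D⁻¹ * Ghat) * (1 - Ghatᴴ * C⁻¹ * Ghat) = 1 := by
    rw [Matrix.add_mul, Matrix.one_mul, Matrix.mul_sub, Matrix.mul_one, hAB]
    abel
  have hinv : (1 + Ghatᴴ * D⁻¹ * Ghat)⁻¹ = 1 - Ghatᴴ * C⁻¹ * Ghat :=
    Matrix.inv_eq_right_inv hkey
  -- square completion for the uplink
  have hsq : ∀ W : Matrix (Fin M) (Fin K) ℂ,
      Wᵀ * C * mconj W + 1 - Wᵀ * Ghat - Ghatᴴ * mconj W
      = (mconj W - C⁻¹ * Ghat)ᴴ * C * (mconj W - C⁻¹ * Ghat)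
        + (1 - Ghatᴴ * C⁻¹ * Ghat) := by
    intro W
    have h1 : (mconj W - C⁻¹ * Ghat)ᴴ = Wᵀ - Ghatᴴ * C⁻¹ := by
      rw [Matrix.conjTranspose_sub, conjTranspose_mconj, Matrix.conjTranspose_mul, hCih]
    have e1 : Wᵀ * C * (C⁻¹ * Ghat) = Wᵀ * Ghat := by
      rw [Matrix.mul_assoc, ← Matrix.mul_assoc C, hCCi, Matrix.one_mul]
    have e2 : Ghatᴴ * C⁻¹ * C = Ghatᴴ := by
      rw [Matrix.mul_assoc, hCiC, Matrix.mul_one]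
    rw [h1, Matrix.sub_mul, Matrix.sub_mul, Matrix.mul_sub, Matrix.mul_sub, e1, e2]
    rw [show Ghatᴴ * (C⁻¹ * Ghat) = Ghatᴴ * C⁻¹ * Ghat from (Matrix.mul_assoc _ _ _).symm]
    abel
  have hεu' : ∀ W, εu W
      = (((mconj W - C⁻¹ * Ghat)ᴴ * C * (mconj W - C⁻¹ * Ghat)).trace).re
        + ((1 - Ghatᴴ * C⁻¹ * Ghat).trace).re := by
    intro W
    rw [hεu W, hsq W, Matrix.trace_add, Complex.add_re]
  have hεu_ge : ∀ W, ((1 - Ghatᴴ * C⁻¹ * Ghat).trace).re ≤ εu W := by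
    intro W
    rw [hεu' W]
    have := psd_trace_re_nonneg
      (hCpd.posSemidef.conjTranspose_mul_mul_same (mconj W - C⁻¹ * Ghat))
    linarith
  have hεuWopt : εu Wopt = ((1 - Ghatᴴ * C⁻¹ * Ghat).trace).re := by
    rw [hεu' Wopt, hWopt, mconj_mconj, sub_self]
    simp
  -- conjugate relation for the downlink channel matrix
  have hCmc : mconj Ghat * Ghatᵀ + mconj Rt = mconj C - ((1/ρ : ℝ) : ℂ) • 1 := by
    have h : mconj C = mconj Ghat * Ghatᵀ + mconj Rt + ((1/ρ : ℝ) : ℂ) • 1 := by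
      rw [hC, hD, mconj_add, mconj_add, mconj_mul, mconj_conjTranspose,
        mconj_smul_ofReal, mconj_one, add_assoc]
    rw [h]; exact (add_sub_cancel_right _ _).symm
  -- real-part trace identities
  have r1 : ∀ B : Matrix (Fin M) (Fin K) ℂ,
      ((Bᵀ * C * mconj B).trace).re = ((Bᴴ * mconj C * B).trace).re := by
    intro B
    rw [← re_trace_mconj (Bᴴ * mconj C * B)]
    congr 2
    simp [mconj_mul, mconj_conjTranspose, mconj_mconj]
  have r2 : ∀ B : Matrix (Fin M) (Fin K) ℂ,
      ((Bᵀ * Ghat).trace).re = ((Bᴴ * mconj Ghat).trace).re := by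
    intro B
    rw [← re_trace_mconj (Bᴴ * mconj Ghat)]
    congr 2
    simp [mconj_mul, mconj_conjTranspose, mconj_mconj]
  have r3 : ∀ B : Matrix (Fin M) (Fin K) ℂ,
      ((Ghatᴴ * mconj B).trace).re = ((Ghatᵀ * B).trace).re := by
    intro B
    rw [← re_trace_mconj (Ghatᵀ * B)]
    congr 2
    simp [mconj_mul, mconj_transpose, mconj_mconj]
  have h1 : ∀ (B : Matrix (Fin M) (Fin K) ℂ) (α : ℝ), εu (α • B)
      = α^2 * ((Bᴴ * mconj C * B).trace).re - α * ((Ghatᵀ * B).trace).re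
        - α * ((Bᴴ * mconj Ghat).trace).re + K := by
    intro B α
    have hW1 : (α • B)ᵀ * C * mconj (α • B) = (α^2 : ℝ) • (Bᵀ * C * mconj B) := by
      rw [Matrix.transpose_smul, mconj_smul_real, Matrix.smul_mul, Matrix.smul_mul,
        Matrix.mul_smul, smul_smul, sq]
    have hW2 : (α • B)ᵀ * Ghat = α • (Bᵀ * Ghat) := by
      rw [Matrix.transpose_smul, Matrix.smul_mul]
    have hW3 : Ghatᴴ * mconj (α • B) = α • (Ghatᴴ * mconj B) := by
      rw [mconj_smul_real, Matrix.mul_smul]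
    rw [hεu, hW1, hW2, hW3, Matrix.trace_sub, Matrix.trace_sub, Matrix.trace_add,
      Matrix.trace_smul, Matrix.trace_smul, Matrix.trace_smul, Matrix.trace_one]
    simp only [Complex.sub_re, Complex.add_re, Complex.real_smul, Complex.mul_re,
      Complex.ofReal_re, Complex.ofReal_im, Complex.natCast_re, zero_mul, sub_zero,
      Fintype.card_fin]
    rw [r1 B, r2 B, r3 B]
    push_cast
    ring
  have h2 : ∀ (B : Matrix (Fin M) (Fin K) ℂ) (α : ℝ), εd B α
      = α^2 * ((Bᴴ * mconj C * B).trace).re - α * ((Ghatᵀ * B).trace).re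
        - α * ((Bᴴ * mconj Ghat).trace).re - α^2/ρ * ((Bᴴ * B).trace).re
        + (α^2/ρ + 1) * K := by
    intro B α
    have hmid : Bᴴ * (mconj C - ((1/ρ : ℝ) : ℂ) • 1) * B
        = Bᴴ * mconj C * B - ((1/ρ : ℝ) : ℂ) • (Bᴴ * B) := by
      rw [Matrix.mul_sub, Matrix.sub_mul]
      congr 1
      rw [Matrix.mul_smul, Matrix.mul_one, Matrix.smul_mul]
    rw [hεd, hCmc, hmid, smul_sub]
    simp only [Matrix.trace_sub, Matrix.trace_smul, Complex.sub_re, Complex.real_smul,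
      smul_eq_mul, Complex.mul_re, Complex.ofReal_re, Complex.ofReal_im, zero_mul,
      sub_zero, one_div]
    ring
  have hbridge : ∀ (B : Matrix (Fin M) (Fin K) ℂ) (α : ℝ),
      εd B α = εu (α • B) + α^2/ρ * ((K:ℝ) - ((B * Bᴴ).trace).re) := by
    intro B α
    rw [h1, h2, Matrix.trace_mul_comm Bᴴ B]
    ring
  -- properties of γ
  set S : ℝ := ∑ i, ∑ j, Complex.normSq ((C⁻¹ * Ghat) i j) with hS
  have hX : C⁻¹ * Ghat ≠ 0 := by
    intro h
    apply hGhat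
    have : Ghat = C * (C⁻¹ * Ghat) := by
      rw [← Matrix.mul_assoc, hCCi, Matrix.one_mul]
    rw [this, h, Matrix.mul_zero]
  have htr : (Ghatᴴ * C⁻¹ * C⁻¹ * Ghat).trace = (S : ℂ) := by
    have h1 : Ghatᴴ * C⁻¹ * C⁻¹ * Ghat = (C⁻¹ * Ghat)ᴴ * (C⁻¹ * Ghat) := by
      rw [Matrix.conjTranspose_mul, hCih]; simp only [Matrix.mul_assoc]
    rw [h1, Matrix.trace_mul_comm, trace_mul_conjTranspose_self]
  have hSpos : 0 < S := by
    have hex : ∃ i j, (C⁻¹ * Ghat) i j ≠ 0 := by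
      by_contra h
      push_neg at h
      exact hX (by ext i j; simpa using h i j)
    obtain ⟨i, j, hij⟩ := hex
    refine Finset.sum_pos' (fun i _ => Finset.sum_nonneg fun j _ => Complex.normSq_nonneg _)
      ⟨i, Finset.mem_univ i, Finset.sum_pos'
        (fun j _ => Complex.normSq_nonneg _)
        ⟨j, Finset.mem_univ j, Complex.normSq_pos.mpr hij⟩⟩
  have hγval : γ = Real.sqrt (S / K) := by rw [hγ, htr, Complex.ofReal_re]
  have hγpos : 0 < γ := hγval ▸ Real.sqrt_pos.mpr (div_pos hSpos hKpos)
  have hγsq : γ^2 = S / K := by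
    rw [hγval]; exact Real.sq_sqrt (le_of_lt (div_pos hSpos hKpos))
  have hBtr : (Bopt * Boptᴴ).trace = (K : ℂ) := by
    rw [hBopt, trace_mul_conjTranspose_self]
    have hentry : ∀ i j, Complex.normSq ((γ⁻¹ • mconj (C⁻¹ * Ghat)) i j)
        = γ⁻¹^2 * Complex.normSq ((C⁻¹ * Ghat) i j) := by
      intro i j
      have he : (γ⁻¹ • mconj (C⁻¹ * Ghat)) i j
          = (↑γ⁻¹ : ℂ) * (starRingEnd ℂ) ((C⁻¹ * Ghat) i j) := by
        rw [Matrix.smul_apply,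
          show (mconj (C⁻¹ * Ghat)) i j = (starRingEnd ℂ) ((C⁻¹ * Ghat) i j) from rfl,
          Complex.real_smul]
      rw [he, Complex.normSq_mul, Complex.normSq_ofReal, Complex.normSq_conj, sq]
    have hsum : ∑ i, ∑ j, Complex.normSq ((γ⁻¹ • mconj (C⁻¹ * Ghat)) i j)
        = γ⁻¹^2 * S := by
      rw [hS, Finset.mul_sum]
      exact Finset.sum_congr rfl fun i _ => by
        rw [Finset.mul_sum]; exact Finset.sum_congr rfl fun j _ => hentry i j
    rw [hsum]
    have : γ⁻¹^2 * S = K := by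
      have hSK : S = γ^2 * K := by rw [hγsq]; field_simp
      rw [hSK, inv_pow]
      field_simp
    rw [this]
    norm_cast
  have hBre : ((Bopt * Boptᴴ).trace).re = (K:ℝ) := by rw [hBtr]; simp
  -- assemble
  refine ⟨by rw [hBopt, hWopt], ⟨⟨Wopt, ?_⟩, ?_⟩, ⟨⟨Bopt, γ, ?_, ?_⟩, ?_⟩⟩
  · rw [hinv]; exact hεuWopt.symm
  · rintro x ⟨W, rfl⟩
    rw [hinv]; exact hεu_ge W
  · rw [hBtr]
  · rw [hbridge, hBre]
    have hgB : γ • Bopt = Wopt := by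
      rw [hBopt, hWopt, smul_smul, mul_inv_cancel₀ hγpos.ne', one_smul]
    rw [hgB, hεuWopt, hinv]
    ring
  · rintro x ⟨B, α, hcon, rfl⟩
    rw [hbridge, hinv]
    have hre : ((B * Bᴴ).trace).re ≤ (K:ℝ) := by
      have := (Complex.le_def.mp hcon).1
      simpa using this
    have h0 : 0 ≤ α^2/ρ * ((K:ℝ) - ((B * Bᴴ).trace).re) :=
      mul_nonneg (by positivity) (by linarith)
    have := hεu_ge (α • B)
    linarith
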